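/- Let (X,q) be a Riemann domain spread over a Banach space E, let A ⊂ X be an open X-bounded set with d_X(A) ≥ δ > 0, and suppose the ball B_s(x) ⊂ A exists. Then the ball B_{s+δ}(x) exists (i.e., q restricts to a homeomorphism of some neighbourhood of x onto B_E(q(x), s+δ)). -/

import Mathlib

open Set Metric

section Aux

variable {X Y : Type*} [TopologicalSpace X] [TopologicalSpace Y] {q : X → Y}

lemma sect_unique [T2Space X] (hq : IsLocalHomeomorph q) {D : Set Y}
    (hD : IsPreconnected D) {g₁ g₂ : Y → X}
    (h₁ : ContinuousOn g₁ D) (h₂ : ContinuousOn g₂ D)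
    (hs₁ : ∀ e ∈ D, q (g₁ e) = e) (hs₂ : ∀ e ∈ D, q (g₂ e) = e)
    {e₀ : Y} (he₀ : e₀ ∈ D) (heq : g₁ e₀ = g₂ e₀) : Set.EqOn g₁ g₂ D := by
  haveI : PreconnectedSpace D := Subtype.preconnectedSpace hD
  set f₁ : D → X := D.restrict g₁ with hf₁
  set f₂ : D → X := D.restrict g₂ with hf₂
  have hc₁ : Continuous f₁ := h₁.restrict
  have hc₂ : Continuous f₂ := h₂.restrict
  have hclosed : IsClosed {d : D | f₁ d = f₂ d} := isClosed_eq hc₁ hc₂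
  have hopen : IsOpen {d : D | f₁ d = f₂ d} := by
    rw [isOpen_iff_mem_nhds]
    intro d hd
    obtain ⟨φ, hpφ, hφq⟩ := hq (f₁ d)
    have hN : (f₁ ⁻¹' φ.source ∩ f₂ ⁻¹' φ.source) ∈ nhds d := by
      apply Filter.inter_mem
      · exact hc₁.continuousAt.preimage_mem_nhds (φ.open_source.mem_nhds hpφ)
      · exact hc₂.continuousAt.preimage_mem_nhds (φ.open_source.mem_nhds (by
          rw [Set.mem_setOf_eq] at hd; rw [← hd]; exact hpφ))
    refine Filter.mem_of_superset hN ?_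
    rintro d' ⟨hd1, hd2⟩
    have : φ (f₁ d') = φ (f₂ d') := by
      rw [← hφq]
      show q (g₁ d') = q (g₂ d')
      rw [hs₁ _ d'.2, hs₂ _ d'.2]
    exact φ.injOn hd1 hd2 this
  have : {d : D | f₁ d = f₂ d} = Set.univ :=
    IsClopen.eq_univ ⟨hclosed, hopen⟩ ⟨⟨e₀, he₀⟩, heq⟩
  intro e he
  have h := this ▸ Set.mem_univ (⟨e, he⟩ : D)
  exact h

lemma sect_exists [Nonempty X] (hq : IsLocalHomeomorph q) {V : Set X}
    (hVo : IsOpen V) (hinj : Set.InjOn q V) :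
    ∃ g : Y → X, ContinuousOn g (q '' V) ∧ (∀ e ∈ q '' V, q (g e) = e ∧ g e ∈ V) ∧
      ∀ v ∈ V, g (q v) = v := by
  classical
  set g : Y → X := Function.invFunOn q V with hg
  have hmem : ∀ e ∈ q '' V, g e ∈ V ∧ q (g e) = e := by
    rintro e ⟨v, hv, rfl⟩
    exact ⟨Function.invFunOn_mem ⟨v, hv, rfl⟩, Function.invFunOn_eq ⟨v, hv, rfl⟩⟩
  have hleft : ∀ v ∈ V, g (q v) = v := by
    intro v hv
    exact hinj (hmem _ ⟨v, hv, rfl⟩).1 hv (hmem _ ⟨v, hv, rfl⟩).2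
  refine ⟨g, ?_, fun e he => ⟨(hmem e he).2, (hmem e he).1⟩, hleft⟩
  apply continuousOn_of_forall_continuousAt
  intro e he
  obtain ⟨φ, huφ, hφq⟩ := hq (g e)
  have hgV := (hmem e he).1
  have hqg := (hmem e he).2
  set O := q '' (V ∩ φ.source) with hO
  have hOopen : IsOpen O := hq.isOpenMap _ (hVo.inter φ.open_source)
  have heO : e ∈ O := ⟨g e, ⟨hgV, huφ⟩, hqg⟩
  have hEq : Set.EqOn g φ.symm O := by
    rintro z ⟨w, ⟨hwV, hwφ⟩, rfl⟩
    have h1 : g (q w) = w := hleft w hwV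
    have h2 : φ.symm (q w) = w := by
      rw [hφq]; exact φ.left_inv hwφ
    rw [h1, h2]
  have hsymm : ContinuousAt φ.symm e := by
    apply φ.symm.continuousAt
    show e ∈ φ.target
    rw [← hqg, hφq]
    exact φ.map_source huφ
  exact hsymm.congr (Filter.eventuallyEq_of_mem (hOopen.mem_nhds heO) fun z hz => (hEq hz).symm)

end Aux

lemma seg_subset {E : Type*} [NormedAddCommGroup E] [NormedSpace ℝ E] {c e p : E} {s ρ : ℝ}
    (hp : p ∈ segment ℝ c e) (h1 : ‖p - c‖ < s) (h2 : ‖e - p‖ < ρ) :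
    segment ℝ c e ⊆ ball c s ∪ ball p ρ := by
  rw [segment_eq_image'] at hp
  obtain ⟨t, ⟨ht0, ht1⟩, rfl⟩ := hp
  intro w hw
  rw [segment_eq_image'] at hw
  obtain ⟨u, ⟨hu0, hu1⟩, rfl⟩ := hw
  have hpc : ‖c + t • (e - c) - c‖ = t * ‖e - c‖ := by
    rw [add_sub_cancel_left, norm_smul, Real.norm_eq_abs, abs_of_nonneg ht0]
  have hep : ‖e - (c + t • (e - c))‖ = (1 - t) * ‖e - c‖ := by
    have : e - (c + t • (e - c)) = (1 - t) • (e - c) := by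
      rw [sub_smul, one_smul]; abel
    rw [this, norm_smul, Real.norm_eq_abs, abs_of_nonneg (by linarith)]
  rcases le_or_gt u t with h | h
  · left
    rw [mem_ball, dist_eq_norm, add_sub_cancel_left, norm_smul, Real.norm_eq_abs,
      abs_of_nonneg hu0]
    calc u * ‖e - c‖ ≤ t * ‖e - c‖ := mul_le_mul_of_nonneg_right h (norm_nonneg _)
      _ < s := hpc ▸ h1
  · right
    rw [mem_ball, dist_eq_norm]
    have heq : c + u • (e - c) - (c + t • (e - c)) = (u - t) • (e - c) := by
      rw [sub_smul]; abel
    rw [heq, norm_smul, Real.norm_eq_abs, abs_of_nonneg (by linarith)]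
    calc (u - t) * ‖e - c‖ ≤ (1 - t) * ‖e - c‖ :=
          mul_le_mul_of_nonneg_right (by linarith) (norm_nonneg _)
      _ < ρ := hep ▸ h2


/-- In a Riemann domain `(X, q)` over a Banach space `E`, a ball `B_r(x)` exists when some
open neighbourhood of `x` is mapped by `q` injectively onto the metric ball `B_E(q x, r)`
(hence homeomorphically, `q` being a local homeomorphism). -/
def HasBall {X E : Type*} [TopologicalSpace X] [NormedAddCommGroup E]
    (q : X → E) (x : X) (r : ℝ) : Prop :=
  ∃ U : Set X, IsOpen U ∧ x ∈ U ∧ Set.InjOn q U ∧ q '' U = Metric.ball (q x) r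

/-- Let `(X,q)` be a Riemann domain spread over a Banach space `E` (`X` Hausdorff and `q` a
local homeomorphism), let `A ⊆ X` be an open `X`-bounded set with `d_X(A) ≥ δ > 0`
(every point of `A` has balls of every radius `< δ`), and suppose the ball `B_s(x)` exists
and is contained in `A`.  Then the ball `B_{s+δ}(x)` exists. -/
theorem stmt_8 {X E : Type*} [TopologicalSpace X] [T2Space X]
    [NormedAddCommGroup E] [NormedSpace ℂ E] [CompleteSpace E]
    (q : X → E) (hq : IsLocalHomeomorph q)
    (A : Set X) (hAopen : IsOpen A) (hAbd : Bornology.IsBounded (q '' A))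
    (δ : ℝ) (hδ : 0 < δ) (hdA : ∀ a ∈ A, ∀ ρ : ℝ, 0 < ρ → ρ < δ → HasBall q a ρ)
    (x : X) (s : ℝ) (hs : 0 < s)
    (U : Set X) (hUopen : IsOpen U) (hxU : x ∈ U) (hUinj : Set.InjOn q U)
    (hUball : q '' U = Metric.ball (q x) s) (hUA : U ⊆ A) :
    HasBall q x (s + δ) := by
  classical
  haveI : Nonempty X := ⟨x⟩
  set c := q x with hc
  have hR : 0 < s + δ := by linarith
  obtain ⟨fU, fUcont, fUsec, fUleft⟩ := sect_exists hq hUopen hUinj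
  rw [hUball] at fUcont fUsec
  have hfUc : fU c = x := fUleft x hxU
  -- construction of the local pieces
  have key : ∀ e : E, ∃ (p : E) (ρ : ℝ) (V : Set X) (g : E → X),
      e ∈ ball c (s + δ) →
      (p ∈ segment ℝ c e ∧ ‖p - c‖ < s ∧ 0 < ρ ∧ ρ < δ ∧ ‖e - p‖ < ρ ∧
      IsOpen V ∧
      ContinuousOn g (ball p ρ) ∧ (∀ z ∈ ball p ρ, q (g z) = z ∧ g z ∈ V) ∧
      (∀ v ∈ V, g (q v) = v) ∧ g p = fU p) := by
    intro e
    by_cases he : e ∈ ball c (s + δ)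
    swap
    · exact ⟨c, 1, ∅, fun _ => x, fun h => absurd h he⟩
    set r := ‖e - c‖ with hr
    have hrR : r < s + δ := by rw [hr, ← dist_eq_norm]; exact mem_ball.mp he
    have hr0 : 0 ≤ r := norm_nonneg _
    have ht : ∃ t : ℝ, 0 ≤ t ∧ t ≤ 1 ∧ t * r < s ∧ (1 - t) * r < δ := by
      rcases lt_or_ge r s with h | h
      · exact ⟨1, by norm_num, by norm_num, by simpa using h, by simpa using hδ⟩
      · have hrpos : 0 < r := lt_of_lt_of_le hs h
        refine ⟨(max (r - δ) 0 + s) / (2 * r), by positivity, ?_, ?_, ?_⟩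
        · rw [div_le_one (by positivity)]
          have h1 : max (r - δ) 0 ≤ r := max_le (by linarith) hr0
          nlinarith
        · have htr : (max (r - δ) 0 + s) / (2 * r) * r = (max (r - δ) 0 + s) / 2 := by
            field_simp
          rw [htr]
          have : max (r - δ) 0 < s := max_lt (by linarith) hs
          linarith
        · have htr : (1 - (max (r - δ) 0 + s) / (2 * r)) * r
              = r - (max (r - δ) 0 + s) / 2 := by
            field_simp
          rw [htr]
          have : r - δ ≤ max (r - δ) 0 := le_max_left _ _
          linarith
    obtain ⟨t, ht0, ht1, hts, htδ⟩ := ht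
    set p := c + t • (e - c) with hp
    have hpc : ‖p - c‖ = t * r := by
      rw [hp, add_sub_cancel_left, norm_smul, Real.norm_eq_abs, abs_of_nonneg ht0]
    have hep : ‖e - p‖ = (1 - t) * r := by
      have : e - p = (1 - t) • (e - c) := by
        rw [hp, sub_smul, one_smul]; abel
      rw [this, norm_smul, Real.norm_eq_abs, abs_of_nonneg (by linarith)]
    have hpseg : p ∈ segment ℝ c e := by
      rw [segment_eq_image']
      exact ⟨t, ⟨ht0, ht1⟩, rfl⟩
    have hpB : p ∈ ball c s := by
      rw [mem_ball, dist_eq_norm, hpc]; exact hts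
    set ρ := ((1 - t) * r + δ) / 2 with hρ
    have hρ0 : 0 < ρ := by
      have : 0 ≤ (1 - t) * r := mul_nonneg (by linarith) hr0
      rw [hρ]; linarith
    have hρδ : ρ < δ := by rw [hρ]; linarith
    have heρ : ‖e - p‖ < ρ := by rw [hep, hρ]; linarith
    have haU : fU p ∈ U := (fUsec p hpB).2
    have hqa : q (fU p) = p := (fUsec p hpB).1
    obtain ⟨V, hVo, haV, hVinj, hVim⟩ := hdA (fU p) (hUA haU) ρ hρ0 hρδ
    rw [hqa] at hVim
    obtain ⟨g, gcont, gsec, gleft⟩ := sect_exists hq hVo hVinj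
    rw [hVim] at gcont gsec
    refine ⟨p, ρ, V, g, fun _ => ⟨hpseg, by rw [hpc]; exact hts, hρ0, hρδ, heρ, hVo,
      gcont, gsec, gleft, ?_⟩⟩
    have hgl := gleft _ haV
    rw [hqa] at hgl
    exact hgl
  choose p ρ V g hkey using key
  -- the glued sections on ball c s ∪ ball (p e) (ρ e)
  set h : E → E → X := fun e z => if z ∈ ball c s then fU z else g e z with hh
  have hprops : ∀ e ∈ ball c (s + δ),
      ContinuousOn (h e) (ball c s ∪ ball (p e) (ρ e)) ∧
      (∀ z ∈ ball c s ∪ ball (p e) (ρ e), q (h e z) = z) ∧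
      Set.EqOn (h e) (g e) (ball (p e) (ρ e)) ∧ h e c = x := by
    intro e he
    obtain ⟨hseg, hpB, hρ0, hρδ, heB, hVo, gcont, gsec, gleft, gp⟩ := hkey e he
    have hpBall : p e ∈ ball c s := by rw [mem_ball, dist_eq_norm]; exact hpB
    have hpBp : p e ∈ ball (p e) (ρ e) := mem_ball_self hρ0
    have hov : Set.EqOn fU (g e) (ball c s ∩ ball (p e) (ρ e)) :=
      sect_unique hq ((convex_ball c s).inter (convex_ball _ _)).isPreconnected
        (fUcont.mono inter_subset_left) (gcont.mono inter_subset_right)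
        (fun z hz => (fUsec z hz.1).1) (fun z hz => (gsec z hz.2).1)
        ⟨hpBall, hpBp⟩ gp.symm
    have hEqg : Set.EqOn (h e) (g e) (ball (p e) (ρ e)) := by
      intro z hz
      by_cases hzB : z ∈ ball c s
      · simp only [hh, if_pos hzB]; exact hov ⟨hzB, hz⟩
      · simp only [hh, if_neg hzB]
    have hEqU : Set.EqOn (h e) fU (ball c s) := fun z hz => if_pos hz
    refine ⟨?_, ?_, hEqg, ?_⟩
    · apply continuousOn_of_forall_continuousAt
      intro z hz
      rcases hz with hz | hz
      · exact (fUcont.continuousAt (isOpen_ball.mem_nhds hz)).congr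
          (Filter.eventuallyEq_of_mem (isOpen_ball.mem_nhds hz) fun w hw => (hEqU hw).symm)
      · exact (gcont.continuousAt (isOpen_ball.mem_nhds hz)).congr
          (Filter.eventuallyEq_of_mem (isOpen_ball.mem_nhds hz) fun w hw => (hEqg hw).symm)
    · intro z hz
      by_cases hzB : z ∈ ball c s
      · simp only [hh, if_pos hzB]; exact (fUsec z hzB).1
      · have hz' : z ∈ ball (p e) (ρ e) := hz.resolve_left hzB
        simp only [hh, if_neg hzB]; exact (gsec z hz').1
    · simp only [hh, if_pos (mem_ball_self hs)]; exact hfUc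
  have segD : ∀ e ∈ ball c (s + δ), segment ℝ c e ⊆ ball c s ∪ ball (p e) (ρ e) := by
    intro e he
    obtain ⟨hseg, hpB, _, _, heB, _⟩ := hkey e he
    exact seg_subset hseg hpB heB
  have agree : ∀ e₁ ∈ ball c (s + δ), ∀ e₂ ∈ ball c (s + δ), ∀ z,
      z ∈ ball (p e₁) (ρ e₁) → z ∈ ball (p e₂) (ρ e₂) →
      segment ℝ c z ⊆ ball c s ∪ ball (p e₁) (ρ e₁) →
      segment ℝ c z ⊆ ball c s ∪ ball (p e₂) (ρ e₂) →
      g e₁ z = g e₂ z := by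
    intro e₁ he₁ e₂ he₂ z hz₁ hz₂ hsg₁ hsg₂
    obtain ⟨hcont₁, hsec₁, hEg₁, hx₁⟩ := hprops e₁ he₁
    obtain ⟨hcont₂, hsec₂, hEg₂, hx₂⟩ := hprops e₂ he₂
    set C := ball c s ∪ segment ℝ c z with hC
    have hCpre : IsPreconnected C :=
      IsPreconnected.union c (mem_ball_self hs) (left_mem_segment ℝ c z)
        (convex_ball c s).isPreconnected (convex_segment c z).isPreconnected
    have hC1 : C ⊆ ball c s ∪ ball (p e₁) (ρ e₁) := union_subset subset_union_left hsg₁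
    have hC2 : C ⊆ ball c s ∪ ball (p e₂) (ρ e₂) := union_subset subset_union_left hsg₂
    have heqC : Set.EqOn (h e₁) (h e₂) C :=
      sect_unique hq hCpre (hcont₁.mono hC1) (hcont₂.mono hC2)
        (fun w hw => hsec₁ w (hC1 hw)) (fun w hw => hsec₂ w (hC2 hw))
        (show c ∈ C from Or.inl (mem_ball_self hs)) (hx₁.trans hx₂.symm)
    have hzC : z ∈ C := Or.inr (right_mem_segment ℝ c z)
    rw [← hEg₁ hz₁, ← hEg₂ hz₂]
    exact heqC hzC
  -- choice of a uniform local radius around each point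
  have eps : ∀ e : E, ∃ ε : ℝ, e ∈ ball c (s + δ) →
      (0 < ε ∧ ball e ε ⊆ ball c (s + δ) ∧ ball e ε ⊆ ball (p e) (ρ e) ∧
       ∀ z ∈ ball e ε, segment ℝ c z ⊆ ball c s ∪ ball (p e) (ρ e)) := by
    intro e
    by_cases he : e ∈ ball c (s + δ)
    swap
    · exact ⟨1, fun hcon => absurd hcon he⟩
    obtain ⟨hseg, hpB, hρ0, hρδ, heB, _⟩ := hkey e he
    have hcomp : IsCompact (segment ℝ c e) := by
      rw [segment_eq_image']
      exact isCompact_Icc.image (by fun_prop)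
    have hopenD : IsOpen (ball c s ∪ ball (p e) (ρ e)) := isOpen_ball.union isOpen_ball
    obtain ⟨ε₀, hε₀, hth⟩ := hcomp.exists_thickening_subset_open hopenD (segD e he)
    have heBmem : dist e (p e) < ρ e := by rw [dist_eq_norm]; exact heB
    have heR : dist e c < s + δ := mem_ball.mp he
    refine ⟨min ε₀ (min (ρ e - dist e (p e)) ((s + δ) - dist e c)), fun _ => ⟨?_, ?_, ?_, ?_⟩⟩
    · exact lt_min hε₀ (lt_min (by linarith) (by linarith))
    · intro z hz
      rw [mem_ball] at hz ⊢
      have h1 : min ε₀ (min (ρ e - dist e (p e)) ((s + δ) - dist e c)) ≤ (s + δ) - dist e c :=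
        (min_le_right _ _).trans (min_le_right _ _)
      have h2 := dist_triangle z e c
      linarith [lt_of_lt_of_le hz h1]
    · intro z hz
      rw [mem_ball] at hz ⊢
      have h1 : min ε₀ (min (ρ e - dist e (p e)) ((s + δ) - dist e c)) ≤ ρ e - dist e (p e) :=
        (min_le_right _ _).trans (min_le_left _ _)
      have h2 := dist_triangle z e (p e)
      linarith [lt_of_lt_of_le hz h1]
    · intro z hz w hw
      apply hth
      rw [mem_thickening_iff]
      rw [segment_eq_image'] at hw
      obtain ⟨u, ⟨hu0, hu1⟩, rfl⟩ := hw
      refine ⟨c + u • (e - c), by rw [segment_eq_image']; exact ⟨u, ⟨hu0, hu1⟩, rfl⟩, ?_⟩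
      have hd : c + u • (z - c) - (c + u • (e - c)) = u • (z - e) := by
        rw [smul_sub, smul_sub]; module
      rw [dist_eq_norm, hd, norm_smul, Real.norm_eq_abs, abs_of_nonneg hu0]
      have hze : ‖z - e‖ < min ε₀ (min (ρ e - dist e (p e)) ((s + δ) - dist e c)) := by
        rw [← dist_eq_norm]; exact mem_ball.mp hz
      have hε₀le : min ε₀ (min (ρ e - dist e (p e)) ((s + δ) - dist e c)) ≤ ε₀ :=
        min_le_left _ _
      calc u * ‖z - e‖ ≤ 1 * ‖z - e‖ := mul_le_mul_of_nonneg_right hu1 (norm_nonneg _)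
        _ = ‖z - e‖ := one_mul _
        _ < ε₀ := lt_of_lt_of_le hze hε₀le
  choose ε hε using eps
  -- local agreement of the global value with each local section
  have Flocal : ∀ e ∈ ball c (s + δ), ∀ z ∈ ball e (ε e), g z z = g e z := by
    intro e he z hz
    obtain ⟨hε0, hsub, hsubp, hsegz⟩ := hε e he
    have hzR : z ∈ ball c (s + δ) := hsub hz
    obtain ⟨hsegz', hpBz, hρ0z, hρδz, heBz, _⟩ := hkey z hzR
    exact agree z hzR e he z (by rw [mem_ball, dist_eq_norm]; exact heBz) (hsubp hz)
      (seg_subset hsegz' hpBz heBz) (hsegz z hz)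
  have hval : ∀ e ∈ ball c (s + δ), ∀ w, w ∈ V e → q w ∈ ball e (ε e) →
      g (q w) (q w) = w := by
    intro e he w hwV hwq
    obtain ⟨_, _, _, _, _, _, _, _, gleft, _⟩ := hkey e he
    rw [Flocal e he (q w) hwq]
    exact gleft w hwV
  -- assemble the ball of radius s + δ
  refine ⟨⋃ e ∈ ball c (s + δ), V e ∩ q ⁻¹' (ball e (ε e)), ?_, ?_, ?_, ?_⟩
  · apply isOpen_biUnion
    intro e he
    obtain ⟨_, _, _, _, _, hVo, _⟩ := hkey e he
    exact hVo.inter (isOpen_ball.preimage hq.continuous)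
  · have hcR : c ∈ ball c (s + δ) := mem_ball_self hR
    obtain ⟨hsegc, hpBc, hρ0c, hρδc, heBc, hVoc, gcontc, gsecc, gleftc, gpc⟩ := hkey c hcR
    have hpc : p c = c := by
      have h1 := hsegc; rw [segment_same] at h1; exact h1
    have hcball : c ∈ ball (p c) (ρ c) := by rw [mem_ball, dist_eq_norm]; exact heBc
    have hgcc : g c c = x := by
      have h1 : g c (p c) = fU (p c) := gpc
      rw [hpc] at h1
      rw [h1, hfUc]
    refine mem_biUnion hcR ⟨?_, ?_⟩
    · rw [← hgcc]; exact (gsecc c hcball).2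
    · show q x ∈ ball c (ε c)
      rw [← hc]
      exact mem_ball_self (hε c hcR).1
  · rintro w₁ hw₁ w₂ hw₂ hqw
    simp only [mem_iUnion] at hw₁ hw₂
    obtain ⟨e₁, he₁, hw₁V, hw₁q⟩ := hw₁
    obtain ⟨e₂, he₂, hw₂V, hw₂q⟩ := hw₂
    have h1 := hval e₁ he₁ w₁ hw₁V hw₁q
    have h2 := hval e₂ he₂ w₂ hw₂V hw₂q
    rw [← h1, ← h2, hqw]
  · apply Set.Subset.antisymm
    · rintro z ⟨w, hw, rfl⟩
      simp only [mem_iUnion] at hw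
      obtain ⟨e, he, hwV, hwq⟩ := hw
      exact (hε e he).2.1 hwq
    · intro z hz
      have hz' : z ∈ ball c (s + δ) := hz
      obtain ⟨hsegz, hpBz, hρ0z, hρδz, heBz, hVoz, gcontz, gsecz, gleftz, gpz⟩ := hkey z hz'
      have hzp : z ∈ ball (p z) (ρ z) := by rw [mem_ball, dist_eq_norm]; exact heBz
      refine ⟨g z z, mem_biUnion hz' ⟨(gsecz z hzp).2, ?_⟩, (gsecz z hzp).1⟩
      show q (g z z) ∈ ball z (ε z)
      rw [(gsecz z hzp).1]
      exact mem_ball_self (hε z hz').1
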